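/- Let α be a positive odd integer and p ≥ α + 3 a prime. Then Σ_{1 ≤ l < 2p, l ≠ p} 1/l^α ≡ 0 (mod p²), where the sum, taken over integers l with 1 ≤ l < 2p and l coprime to p, is computed in ℤ/p²ℤ. -/

import Mathlib

lemma aux_sq_zero_pow {R : Type*} [CommRing R] (c x : R) (hc : c ^ 2 = 0) (n : ℕ) :
    (x + c) ^ (n + 1) = x ^ (n + 1) + (n + 1 : ℕ) * c * x ^ n := by
  induction n with
  | zero => push_cast; ring
  | succ n ih =>
    rw [pow_succ, ih]
    push_cast
    linear_combination ((n : R) + 1) * x ^ n * hc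

lemma aux_pmul_zero (p : ℕ) (hp : p ≠ 0) (x : ZMod (p ^ 2))
    (h : ZMod.castHom (dvd_pow_self p two_ne_zero) (ZMod p) x = 0) :
    (p : ZMod (p ^ 2)) * x = 0 := by
  haveI : NeZero (p ^ 2) := ⟨pow_ne_zero 2 hp⟩
  obtain ⟨y, rfl⟩ := ZMod.natCast_zmod_surjective x
  rw [map_natCast, ZMod.natCast_eq_zero_iff] at h
  rw [← Nat.cast_mul, ZMod.natCast_eq_zero_iff, pow_two]
  exact mul_dvd_mul_left p h

lemma aux_cast_inv (p : ℕ) [Fact p.Prime] (x : ZMod (p ^ 2)) (hx : IsUnit x) :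
    ZMod.castHom (dvd_pow_self p two_ne_zero) (ZMod p) x⁻¹ =
      (ZMod.castHom (dvd_pow_self p two_ne_zero) (ZMod p) x)⁻¹ := by
  have h := ZMod.mul_inv_of_unit x hx
  have h2 := congrArg (ZMod.castHom (dvd_pow_self p two_ne_zero) (ZMod p)) h
  rw [map_mul, map_one] at h2
  exact (inv_eq_of_mul_eq_one_right h2).symm

lemma aux_sum_inv_pow (p k : ℕ) [Fact p.Prime] (hk : 0 < k) (hkp : k < p - 1) :
    ∑ l ∈ Finset.Ico 1 p, (((l : ZMod p)) ^ k)⁻¹ = 0 := by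
  haveI : NeZero p := ⟨(Fact.out : p.Prime).ne_zero⟩
  have h0 : ∑ l ∈ Finset.range p, (((l : ZMod p)) ^ k)⁻¹
      = ∑ x : ZMod p, (x ^ k)⁻¹ := by
    refine Finset.sum_nbij' (i := fun l => ((l : ℕ) : ZMod p)) (j := fun x => x.val)
      ?_ ?_ ?_ ?_ ?_
    · intro a _; exact Finset.mem_univ _
    · intro a _; exact Finset.mem_range.mpr (ZMod.val_lt a)
    · intro a ha; exact ZMod.val_natCast_of_lt (Finset.mem_range.mp ha)
    · intro a _; exact ZMod.natCast_zmod_val a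
    · intro a _; rfl
  have h1 : Finset.range p = insert 0 (Finset.Ico 1 p) := by
    ext x
    simp only [Finset.mem_range, Finset.mem_insert, Finset.mem_Ico]
    omega
  rw [h1, Finset.sum_insert (by simp)] at h0
  rw [Nat.cast_zero, zero_pow hk.ne', inv_zero, zero_add] at h0
  rw [h0]
  have h2 : ∀ x : ZMod p, (x ^ k)⁻¹ = (x⁻¹) ^ k := fun x => (inv_pow x k).symm
  simp_rw [h2]
  have h3 : ∑ x : ZMod p, (x⁻¹) ^ k = ∑ x : ZMod p, x ^ k :=
    Fintype.sum_bijective _ (inv_involutive.bijective) _ _ (fun x => rfl)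
  rw [h3]
  exact FiniteField.sum_pow_lt_card_sub_one (K := ZMod p) k (by rwa [ZMod.card])

theorem stmt9 (p α : ℕ) (hp : p.Prime) (hα : 0 < α) (hodd : Odd α) (hpα : α + 3 ≤ p) :
    (∑ l ∈ (Finset.Ico 1 (2 * p)).filter (fun l => l ≠ p),
      ((l : ZMod (p ^ 2)) ^ α)⁻¹) = 0 := by
  haveI : Fact p.Prime := ⟨hp⟩
  have hp2 : 2 ≤ p := hp.two_le
  -- units
  have hunit : ∀ l : ℕ, ¬ p ∣ l → IsUnit ((l : ZMod (p ^ 2))) := by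
    intro l hl
    rw [ZMod.isUnit_iff_coprime]
    exact Nat.Coprime.pow_right 2 ((hp.coprime_iff_not_dvd.mpr hl).symm)
  have hndvd1 : ∀ l, l ∈ Finset.Ico 1 p → ¬ p ∣ l := by
    intro l hl hd
    rw [Finset.mem_Ico] at hl
    have := Nat.le_of_dvd (by omega) hd
    omega
  have hndvd2 : ∀ l, l ∈ Finset.Ico 1 p → ¬ p ∣ (2 * p - l) := by
    intro l hl hd
    rw [Finset.mem_Ico] at hl
    have h2 : p ∣ 2 * p - (2 * p - l) := Nat.dvd_sub (dvd_mul_left p 2) hd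
    rw [show 2 * p - (2 * p - l) = l by omega] at h2
    exact hndvd1 l (Finset.mem_Ico.mpr (by omega)) h2
  -- split and reindex
  have hsplit : (Finset.Ico 1 (2 * p)).filter (fun l => l ≠ p)
      = Finset.Ico 1 p ∪ Finset.Ico (p + 1) (2 * p) := by
    ext x
    simp only [Finset.mem_filter, Finset.mem_Ico, Finset.mem_union]
    omega
  have hdisj : Disjoint (Finset.Ico 1 p) (Finset.Ico (p + 1) (2 * p)) := by
    rw [Finset.disjoint_left]
    intro a ha hb
    rw [Finset.mem_Ico] at ha hb
    omega
  rw [hsplit, Finset.sum_union hdisj]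
  have hre : ∑ l ∈ Finset.Ico (p + 1) (2 * p), ((l : ZMod (p ^ 2)) ^ α)⁻¹
      = ∑ l ∈ Finset.Ico 1 p, (((2 * p - l : ℕ) : ZMod (p ^ 2)) ^ α)⁻¹ := by
    refine Finset.sum_nbij' (i := fun l => 2 * p - l) (j := fun l => 2 * p - l)
      ?_ ?_ ?_ ?_ ?_ <;> intro a ha <;> rw [Finset.mem_Ico] at ha
    · exact Finset.mem_Ico.mpr (by omega)
    · exact Finset.mem_Ico.mpr (by omega)
    · omega
    · omega
    · rw [show 2 * p - (2 * p - a) = a by omega]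
  rw [hre, ← Finset.sum_add_distrib]
  -- pointwise identity
  have key : ∀ l ∈ Finset.Ico 1 p,
      ((l : ZMod (p ^ 2)) ^ α)⁻¹ + (((2 * p - l : ℕ) : ZMod (p ^ 2)) ^ α)⁻¹
      = (p : ZMod (p ^ 2)) * (2 * (α : ZMod (p ^ 2)) * (l : ZMod (p ^ 2)) ^ (α - 1) *
          (((l : ZMod (p ^ 2)) ^ α)⁻¹ * (((2 * p - l : ℕ) : ZMod (p ^ 2)) ^ α)⁻¹)) := by
    intro l hl
    have hl' := Finset.mem_Ico.mp hl
    set a : ZMod (p ^ 2) := (l : ZMod (p ^ 2)) with ha_def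
    set b : ZMod (p ^ 2) := ((2 * p - l : ℕ) : ZMod (p ^ 2)) with hb_def
    have haU : IsUnit (a ^ α) := (hunit l (hndvd1 l hl)).pow α
    have hbU : IsUnit (b ^ α) := (hunit _ (hndvd2 l hl)).pow α
    obtain ⟨k, hk⟩ : ∃ k, α = k + 1 := ⟨α - 1, by omega⟩
    have hke : Even k := Nat.even_iff.mpr (by have := Nat.odd_iff.mp hodd; omega)
    have hb : b = ((2 * p : ℕ) : ZMod (p ^ 2)) - a := by
      rw [hb_def, Nat.cast_sub (by omega)]
    have hc2 : ((2 * p : ℕ) : ZMod (p ^ 2)) ^ 2 = 0 := by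
      have hpz : ((p : ZMod (p ^ 2))) ^ 2 = 0 := by
        rw [← Nat.cast_pow, ZMod.natCast_self]
      push_cast
      linear_combination (4 : ZMod (p ^ 2)) * hpz
    have hbpow : b ^ α = -(a ^ α) + (α : ZMod (p ^ 2)) * ((2 * p : ℕ) : ZMod (p ^ 2)) * a ^ (α - 1) := by
      have := aux_sq_zero_pow ((2 * p : ℕ) : ZMod (p ^ 2)) (-a) hc2 k
      rw [hb]
      calc (((2 * p : ℕ) : ZMod (p ^ 2)) - a) ^ α
          = (-a + ((2 * p : ℕ) : ZMod (p ^ 2))) ^ (k + 1) := by rw [hk]; ring_nf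
        _ = (-a) ^ (k + 1) + ((k + 1 : ℕ) : ZMod (p ^ 2)) * ((2 * p : ℕ) : ZMod (p ^ 2)) * (-a) ^ k := this
        _ = -(a ^ α) + (α : ZMod (p ^ 2)) * ((2 * p : ℕ) : ZMod (p ^ 2)) * a ^ (α - 1) := by
            have hodd' : Odd (k + 1) := hk ▸ hodd
            rw [hodd'.neg_pow, hke.neg_pow, ← hk, show k = α - 1 by omega]
    have hsum : a ^ α + b ^ α
        = (p : ZMod (p ^ 2)) * (2 * (α : ZMod (p ^ 2)) * a ^ (α - 1)) := by
      rw [hbpow]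
      push_cast
      ring
    have expand : (a ^ α)⁻¹ + (b ^ α)⁻¹
        = (a ^ α + b ^ α) * ((a ^ α)⁻¹ * (b ^ α)⁻¹) := by
      have h1 := ZMod.mul_inv_of_unit _ haU
      have h2 := ZMod.mul_inv_of_unit _ hbU
      calc (a ^ α)⁻¹ + (b ^ α)⁻¹
          = (b ^ α * (b ^ α)⁻¹) * (a ^ α)⁻¹ + (a ^ α * (a ^ α)⁻¹) * (b ^ α)⁻¹ := by
            rw [h1, h2]; ring
        _ = (a ^ α + b ^ α) * ((a ^ α)⁻¹ * (b ^ α)⁻¹) := by ring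
    rw [expand, hsum]
    ring
  rw [Finset.sum_congr rfl key, ← Finset.mul_sum]
  apply aux_pmul_zero p hp.ne_zero
  rw [map_sum]
  -- compute the sum mod p
  have term : ∀ l ∈ Finset.Ico 1 p,
      ZMod.castHom (dvd_pow_self p two_ne_zero) (ZMod p)
        (2 * (α : ZMod (p ^ 2)) * (l : ZMod (p ^ 2)) ^ (α - 1) *
          (((l : ZMod (p ^ 2)) ^ α)⁻¹ * (((2 * p - l : ℕ) : ZMod (p ^ 2)) ^ α)⁻¹))
      = -(2 * (α : ZMod p)) * (((l : ZMod p) ^ (α + 1))⁻¹) := by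
    intro l hl
    have hl' := Finset.mem_Ico.mp hl
    have haU : IsUnit (((l : ZMod (p ^ 2))) ^ α) := (hunit l (hndvd1 l hl)).pow α
    have hbU : IsUnit ((((2 * p - l : ℕ) : ZMod (p ^ 2))) ^ α) := (hunit _ (hndvd2 l hl)).pow α
    simp only [map_mul, aux_cast_inv p _ haU, aux_cast_inv p _ hbU, map_pow, map_natCast,
      map_ofNat]
    have hx : (l : ZMod p) ≠ 0 := by
      rw [Ne, ZMod.natCast_eq_zero_iff]
      exact hndvd1 l hl
    have hb2 : ((2 * p - l : ℕ) : ZMod p) = -(l : ZMod p) := by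
      rw [Nat.cast_sub (by omega)]
      push_cast
      rw [ZMod.natCast_self]
      ring
    rw [hb2, hodd.neg_pow, inv_neg]
    have hpow : (l : ZMod p) ^ (α - 1) * (((l : ZMod p) ^ α)⁻¹ * ((l : ZMod p) ^ α)⁻¹)
        = ((l : ZMod p) ^ (α + 1))⁻¹ := by
      have hne : (l : ZMod p) ^ α ≠ 0 := pow_ne_zero _ hx
      have hne2 : (l : ZMod p) ^ (α + 1) ≠ 0 := pow_ne_zero _ hx
      field_simp
      rw [← pow_add, ← pow_mul, show α - 1 + (α + 1) = α * 2 by omega]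
    calc 2 * (α : ZMod p) * (l : ZMod p) ^ (α - 1) *
          (((l : ZMod p) ^ α)⁻¹ * -((l : ZMod p) ^ α)⁻¹)
        = -(2 * (α : ZMod p)) * ((l : ZMod p) ^ (α - 1) *
            (((l : ZMod p) ^ α)⁻¹ * ((l : ZMod p) ^ α)⁻¹)) := by ring
      _ = -(2 * (α : ZMod p)) * (((l : ZMod p) ^ (α + 1))⁻¹) := by rw [hpow]
  rw [Finset.sum_congr rfl term, ← Finset.mul_sum,
    aux_sum_inv_pow p (α + 1) (by omega) (by omega), mul_zero]
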